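/- Fractional local ratio for hypergraph matching: let 𝒢 = (𝒱, ℰ) be a finite hypergraph, x : ℰ → ℝ≥0 a fractional matching (Σ_{e ∋ v} x(e) ≤ 1 for all v), k ∈ ℕ, and ℰ = {e₁, …, e_m} an ordering such that for each i, Σ{ x(e') : e' ∈ {e_i, …, e_m}, e' ∩ e_i ≠ ∅ } ≤ k. Then for any weights w : ℰ → ℝ≥0 there exists a matching M ⊆ ℰ (pairwise disjoint hyperedges) with w(M) ≥ (1/k) Σ_e w(e) x(e). -/

import Mathlib

open Finset

open Classical in
private lemma aux_local_ratio {𝒱 : Type*} [DecidableEq 𝒱] (m k : ℕ) (hk : 0 < k)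
    (e : Fin m → Finset 𝒱) (hedges : ∀ i, (e i).Nonempty) :
    ∀ (n : ℕ) (x w : Fin m → ℝ),
      (Finset.univ.filter (fun j => x j ≠ 0)).card ≤ n →
      (∀ i, 0 ≤ x i) →
      (∀ j, x j ≠ 0 → 0 < w j) →
      (∀ i : Fin m,
        ∑ j ∈ Finset.univ.filter (fun j => i ≤ j ∧ (e i ∩ e j).Nonempty), x j ≤ (k : ℝ)) →
      ∃ M : Finset (Fin m),
        (∀ i ∈ M, ∀ j ∈ M, i ≠ j → Disjoint (e i) (e j)) ∧
        (1 / (k : ℝ)) * ∑ i, w i * x i ≤ ∑ i ∈ M, w i := by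
  intro n
  induction n with
  | zero =>
    intro x w hcard hx hinv horder
    have hempty : Finset.univ.filter (fun j => x j ≠ 0) = ∅ :=
      Finset.card_eq_zero.mp (Nat.le_zero.mp hcard)
    have hall : ∀ j, x j = 0 := by
      intro j
      by_contra hj
      have : j ∈ Finset.univ.filter (fun j => x j ≠ 0) := by simp [hj]
      simp [hempty] at this
    refine ⟨∅, by simp, ?_⟩
    simp [hall]
  | succ n ih =>
    intro x w hcard hx hinv horder
    by_cases hT : Finset.univ.filter (fun j => x j ≠ 0) = ∅
    · have hall : ∀ j, x j = 0 := by
        intro j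
        by_contra hj
        have : j ∈ Finset.univ.filter (fun j => x j ≠ 0) := by simp [hj]
        simp [hT] at this
      refine ⟨∅, by simp, ?_⟩
      simp [hall]
    · set T := Finset.univ.filter (fun j => x j ≠ 0) with hTdef
      have hTne : T.Nonempty := Finset.nonempty_iff_ne_empty.mpr hT
      set i₀ := T.min' hTne with hi0def
      have hxi₀ : x i₀ ≠ 0 := by
        have h : i₀ ∈ T := T.min'_mem hTne
        exact (Finset.mem_filter.mp h).2
      have hmin : ∀ j, x j ≠ 0 → i₀ ≤ j := by
        intro j hj
        exact T.min'_le j (by simp [hTdef, hj])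
      have hc : 0 < w i₀ := hinv i₀ hxi₀
      set c := w i₀ with hcdef
      set w' : Fin m → ℝ := fun j => w j - (if (e i₀ ∩ e j).Nonempty then c else 0) with hw'def
      set x' : Fin m → ℝ := fun j => if 0 < w' j then x j else 0 with hx'def
      have hw'i₀ : w' i₀ = 0 := by
        simp [hw'def, Finset.inter_self, hedges i₀, hcdef]
      have hx'i₀ : x' i₀ = 0 := by simp [hx'def, hw'i₀]
      -- card bound
      have hcard' : (Finset.univ.filter (fun j => x' j ≠ 0)).card ≤ n := by
        have hsub : Finset.univ.filter (fun j => x' j ≠ 0) ⊆ T.erase i₀ := by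
          intro j hj
          simp only [Finset.mem_filter, Finset.mem_univ, true_and] at hj
          have hxj : x j ≠ 0 := by
            intro h0
            apply hj
            simp [hx'def, h0]
          refine Finset.mem_erase.mpr ⟨?_, by simp [hTdef, hxj]⟩
          intro hji₀
          rw [hji₀] at hj
          exact hj hx'i₀
        have h1 : 1 ≤ T.card := Finset.card_pos.mpr hTne
        calc (Finset.univ.filter (fun j => x' j ≠ 0)).card ≤ (T.erase i₀).card :=
              Finset.card_le_card hsub
          _ = T.card - 1 := Finset.card_erase_of_mem (T.min'_mem hTne)
          _ ≤ n := by omega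
      have hx'nonneg : ∀ i, 0 ≤ x' i := by
        intro i
        simp only [hx'def]
        split
        · exact hx i
        · exact le_refl 0
      have hx'le : ∀ i, x' i ≤ x i := by
        intro i
        simp only [hx'def]
        split
        · exact le_refl _
        · exact hx i
      have hinv' : ∀ j, x' j ≠ 0 → 0 < w' j := by
        intro j hj
        by_contra h
        exact hj (by simp [hx'def, h])
      have horder' : ∀ i : Fin m,
          ∑ j ∈ Finset.univ.filter (fun j => i ≤ j ∧ (e i ∩ e j).Nonempty), x' j ≤ (k : ℝ) := by
        intro i
        calc ∑ j ∈ Finset.univ.filter (fun j => i ≤ j ∧ (e i ∩ e j).Nonempty), x' j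
            ≤ ∑ j ∈ Finset.univ.filter (fun j => i ≤ j ∧ (e i ∩ e j).Nonempty), x j :=
              Finset.sum_le_sum (fun j _ => hx'le j)
          _ ≤ (k : ℝ) := horder i
      obtain ⟨M', hM'disj, hM'bound⟩ := ih x' w' hcard' hx'nonneg hinv' horder'
      -- key sum decomposition
      have hsplit : ∑ i, w i * x i
          = (∑ i, w' i * x i) + c * ∑ j ∈ Finset.univ.filter (fun j => (e i₀ ∩ e j).Nonempty), x j := by
        have : ∀ i : Fin m, w i * x i
            = w' i * x i + (if (e i₀ ∩ e i).Nonempty then c * x i else 0) := by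
          intro i
          simp only [hw'def]
          split <;> ring
        rw [Finset.sum_congr rfl (fun i _ => this i), Finset.sum_add_distrib,
          Finset.sum_ite, Finset.sum_const_zero, add_zero, ← Finset.mul_sum]
      have hNsum : ∑ j ∈ Finset.univ.filter (fun j => (e i₀ ∩ e j).Nonempty), x j ≤ (k : ℝ) := by
        have heq : ∑ j ∈ Finset.univ.filter (fun j => i₀ ≤ j ∧ (e i₀ ∩ e j).Nonempty), x j
            = ∑ j ∈ Finset.univ.filter (fun j => (e i₀ ∩ e j).Nonempty), x j := by
          apply Finset.sum_subset
          · intro j hj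
            simp only [Finset.mem_filter, Finset.mem_univ, true_and] at hj ⊢
            exact hj.2
          · intro j hj hnj
            simp only [Finset.mem_filter, Finset.mem_univ, true_and, not_and] at hj hnj
            by_contra hxj
            exact hnj (hmin j hxj) hj
        rw [← heq]
        exact horder i₀
      have hwx' : ∑ i, w' i * x i ≤ ∑ i, w' i * x' i := by
        apply Finset.sum_le_sum
        intro i _
        rcases lt_or_ge 0 (w' i) with h | h
        · simp [hx'def, h]
        · have hx0 : x' i = 0 := by simp [hx'def, not_lt.mpr h]
          rw [hx0, mul_zero]
          exact mul_nonpos_of_nonpos_of_nonneg h (hx i)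
      have hA : ∑ i, w i * x i ≤ (∑ i, w' i * x' i) + c * k := by
        rw [hsplit]
        have := mul_le_mul_of_nonneg_left hNsum (le_of_lt hc)
        linarith
      have hk' : (0 : ℝ) < (k : ℝ) := by exact_mod_cast hk
      have hkey : (1 / (k : ℝ)) * ∑ i, w i * x i ≤ (∑ i ∈ M', w' i) + c := by
        have h1 : (1 / (k : ℝ)) * ∑ i, w i * x i
            ≤ (1 / (k : ℝ)) * ((∑ i, w' i * x' i) + c * k) :=
          mul_le_mul_of_nonneg_left hA (by positivity)
        have h2 : (1 / (k : ℝ)) * ((∑ i, w' i * x' i) + c * k)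
            = (1 / (k : ℝ)) * (∑ i, w' i * x' i) + c := by
          field_simp
        linarith [hM'bound]
      have hMsum : ∀ S : Finset (Fin m), ∑ i ∈ S, w i
          = (∑ i ∈ S, w' i) + ∑ i ∈ S, (if (e i₀ ∩ e i).Nonempty then c else 0) := by
        intro S
        rw [← Finset.sum_add_distrib]
        apply Finset.sum_congr rfl
        intro i _
        simp only [hw'def]
        ring
      by_cases hcase : ∃ j ∈ M', (e i₀ ∩ e j).Nonempty
      · obtain ⟨j₀, hj₀M, hj₀⟩ := hcase
        refine ⟨M', hM'disj, ?_⟩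
        have hite : c ≤ ∑ i ∈ M', (if (e i₀ ∩ e i).Nonempty then c else 0) := by
          have := Finset.single_le_sum (f := fun i => if (e i₀ ∩ e i).Nonempty then c else 0)
            (fun i _ => by by_cases h : (e i₀ ∩ e i).Nonempty <;> simp [h, le_of_lt hc]) hj₀M
          simpa [hj₀] using this
        rw [hMsum M']
        linarith
      · push_neg at hcase
        have hi₀M : i₀ ∉ M' := by
          intro h
          exact Finset.nonempty_iff_ne_empty.mp (by rw [Finset.inter_self]; exact hedges i₀) (hcase i₀ h)
        refine ⟨insert i₀ M', ?_, ?_⟩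
        · intro i hi j hj hij
          rcases Finset.mem_insert.mp hi with hi' | hi' <;>
            rcases Finset.mem_insert.mp hj with hj' | hj'
          · exact absurd (hi'.trans hj'.symm) hij
          · subst hi'
            rw [Finset.disjoint_iff_inter_eq_empty]
            exact hcase j hj'
          · subst hj'
            rw [disjoint_comm, Finset.disjoint_iff_inter_eq_empty]
            exact hcase i hi'
          · exact hM'disj i hi' j hj' hij
        · rw [Finset.sum_insert hi₀M, hMsum M']
          have hzero : ∑ i ∈ M', (if (e i₀ ∩ e i).Nonempty then c else 0) = 0 := by
            apply Finset.sum_eq_zero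
            intro i hi
            simp [hcase i hi]
          rw [hzero]
          have : w i₀ = c := rfl
          linarith

/-- Fractional local ratio for hypergraph matching (Chan–Lau): let `e : Fin m → Finset 𝒱`
be the (nonempty) hyperedges of a finite hypergraph, `x` a nonnegative fractional matching
(`∑_{i : v ∈ e i} x i ≤ 1` for every vertex `v`), and suppose the ordering of the
hyperedges satisfies `∑ { x j : j ≥ i, e j ∩ e i ≠ ∅ } ≤ k` for each `i`. Then for any
nonnegative weights `w` there is a matching `M` (pairwise disjoint hyperedges) with
`w(M) ≥ (1/k) ∑ i, w i · x i`. -/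
theorem fractional_local_ratio {𝒱 : Type*} [DecidableEq 𝒱] [Fintype 𝒱]
    (m k : ℕ) (e : Fin m → Finset 𝒱) (x w : Fin m → ℝ)
    (hedges : ∀ i, (e i).Nonempty)
    (hx : ∀ i, 0 ≤ x i) (hw : ∀ i, 0 ≤ w i)
    (hmatch : ∀ v : 𝒱, ∑ i ∈ Finset.univ.filter (fun i => v ∈ e i), x i ≤ 1)
    (horder : ∀ i : Fin m,
      ∑ j ∈ Finset.univ.filter (fun j => i ≤ j ∧ (e i ∩ e j).Nonempty), x j ≤ (k : ℝ)) :
    ∃ M : Finset (Fin m),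
      (∀ i ∈ M, ∀ j ∈ M, i ≠ j → Disjoint (e i) (e j)) ∧
      (1 / (k : ℝ)) * ∑ i, w i * x i ≤ ∑ i ∈ M, w i := by
  classical
  rcases Nat.eq_zero_or_pos k with hk | hk
  · refine ⟨∅, by simp, ?_⟩
    simp [hk]
  · set x₀ : Fin m → ℝ := fun j => if 0 < w j then x j else 0 with hx₀def
    have hx₀nonneg : ∀ i, 0 ≤ x₀ i := by
      intro i
      simp only [hx₀def]
      split
      · exact hx i
      · exact le_refl 0
    have hx₀le : ∀ i, x₀ i ≤ x i := by
      intro i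
      simp only [hx₀def]
      split
      · exact le_refl _
      · exact hx i
    have hinv : ∀ j, x₀ j ≠ 0 → 0 < w j := by
      intro j hj
      by_contra h
      exact hj (by simp [hx₀def, h])
    have horder' : ∀ i : Fin m,
        ∑ j ∈ Finset.univ.filter (fun j => i ≤ j ∧ (e i ∩ e j).Nonempty), x₀ j ≤ (k : ℝ) := by
      intro i
      calc ∑ j ∈ Finset.univ.filter (fun j => i ≤ j ∧ (e i ∩ e j).Nonempty), x₀ j
          ≤ ∑ j ∈ Finset.univ.filter (fun j => i ≤ j ∧ (e i ∩ e j).Nonempty), x j :=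
            Finset.sum_le_sum (fun j _ => hx₀le j)
        _ ≤ (k : ℝ) := horder i
    obtain ⟨M, hdisj, hbound⟩ := aux_local_ratio m k hk e hedges
      (Finset.univ.filter (fun j => x₀ j ≠ 0)).card x₀ w le_rfl hx₀nonneg hinv horder'
    refine ⟨M, hdisj, ?_⟩
    have heq : ∑ i, w i * x i = ∑ i, w i * x₀ i := by
      apply Finset.sum_congr rfl
      intro i _
      simp only [hx₀def]
      split
      · rfl
      · next h =>
        push_neg at h
        have hw0 : w i = 0 := le_antisymm h (hw i)
        simp [hw0]
    rw [heq]
    exact hbound
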